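/- Let y be locally integrable on ℝ with y(t) = 0 for t < 0. Then for almost every t, the fractional integral I^γ y(t) = (1/Γ(γ)) ∫_0^t (t−τ)^{γ−1} y(τ) dτ converges to y(t) as γ → 0⁺. -/

import Mathlib

open MeasureTheory Filter

open scoped ENNReal Topology

lemma dyadic_bound (G : ℝ → ℝ≥0∞) (hG : AEMeasurable G volume) {t δ ε γ : ℝ}
    (hδ : 0 < δ) (hδ1 : δ ≤ 1) (hε : 0 ≤ ε) (hγ : 0 < γ) (hγ1 : γ ≤ 1)
    (hA : ∀ u, 0 < u → u ≤ δ → ∫⁻ τ in Set.Ioc (t - u) t, G τ ≤ ENNReal.ofReal (ε * u)) :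
    ∫⁻ τ in Set.Ioc (t - δ) t, ENNReal.ofReal ((t - τ) ^ (γ - 1)) * G τ
      ≤ ENNReal.ofReal (4 * ε / (γ * Real.log 2)) := by
  set a : ℕ → ℝ := fun k => t - δ * (2:ℝ)⁻¹ ^ k with ha
  have hamono : Monotone a := by
    intro i j hij
    have : (2:ℝ)⁻¹ ^ j ≤ (2:ℝ)⁻¹ ^ i :=
      pow_le_pow_of_le_one (by norm_num) (by norm_num) hij
    simp only [ha]
    nlinarith
  have halt : ∀ k, a k < t := by
    intro k
    have : (0:ℝ) < δ * (2:ℝ)⁻¹ ^ k := by positivity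
    simp only [ha]; linarith
  have hage : ∀ k, t - δ ≤ a k := by
    intro k
    have h1 : (2:ℝ)⁻¹ ^ k ≤ 1 := pow_le_one₀ (by norm_num) (by norm_num)
    have : δ * (2:ℝ)⁻¹ ^ k ≤ δ := by nlinarith
    simp only [ha]; linarith
  have hUnion : (⋃ k, Set.Ioc (a k) (a (k + 1))) = Set.Ioo (t - δ) t := by
    ext x
    simp only [Set.mem_iUnion, Set.mem_Ioc, Set.mem_Ioo]
    constructor
    · rintro ⟨k, h1, h2⟩
      exact ⟨lt_of_le_of_lt (hage k) h1, h2.trans_lt (halt (k + 1))⟩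
    · rintro ⟨h1, h2⟩
      have hpos : 0 < t - x := by linarith
      have hex : ∃ n : ℕ, δ * (2:ℝ)⁻¹ ^ n ≤ t - x := by
        obtain ⟨n, hn⟩ := exists_pow_lt_of_lt_one (div_pos hpos hδ)
          (by norm_num : (2:ℝ)⁻¹ < 1)
        exact ⟨n, le_of_lt (by rwa [mul_comm, ← lt_div_iff₀ hδ])⟩
      set N := Nat.find hex with hN
      have hNspec : δ * (2:ℝ)⁻¹ ^ N ≤ t - x := Nat.find_spec hex
      have hN0 : N ≠ 0 := by
        intro h
        rw [h] at hNspec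
        simp at hNspec
        linarith
      refine ⟨N - 1, ?_, ?_⟩
      · have hmin := Nat.find_min hex (show N - 1 < N from
          Nat.sub_lt (Nat.pos_of_ne_zero hN0) one_pos)
        push_neg at hmin
        simp only [ha]
        linarith
      · have hsucc : N - 1 + 1 = N := Nat.succ_pred_eq_of_ne_zero hN0
        rw [hsucc]
        simp only [ha]
        linarith
  have hdisj : Pairwise (Function.onFun Disjoint fun k => Set.Ioc (a k) (a (k + 1))) := by
    have := hamono.pairwise_disjoint_on_Ioc_succ
    simpa using this
  set r : ℝ := (2:ℝ)⁻¹ ^ γ with hrdef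
  have hr0 : (0:ℝ) ≤ r := Real.rpow_nonneg (by norm_num) _
  have hr1 : r < 1 := Real.rpow_lt_one (by norm_num) (by norm_num) hγ
  set C : ℝ := 2 * ε * δ ^ γ with hCdef
  have hC0 : 0 ≤ C := by
    have : (0:ℝ) ≤ δ ^ γ := Real.rpow_nonneg hδ.le _
    positivity
  have piece : ∀ k : ℕ, ∫⁻ τ in Set.Ioc (a k) (a (k + 1)),
      ENNReal.ofReal ((t - τ) ^ (γ - 1)) * G τ ≤ ENNReal.ofReal (C * r ^ (k + 1)) := by
    intro k
    have hxpos : (0:ℝ) < δ * (2:ℝ)⁻¹ ^ (k + 1) := by positivity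
    calc ∫⁻ τ in Set.Ioc (a k) (a (k + 1)), ENNReal.ofReal ((t - τ) ^ (γ - 1)) * G τ
        ≤ ∫⁻ τ in Set.Ioc (a k) (a (k + 1)),
            ENNReal.ofReal ((δ * (2:ℝ)⁻¹ ^ (k + 1)) ^ (γ - 1)) * G τ := by
          apply setLIntegral_mono' measurableSet_Ioc
          intro τ hτ
          apply mul_le_mul_left
          apply ENNReal.ofReal_le_ofReal
          apply Real.rpow_le_rpow_of_nonpos hxpos ?_ (by linarith)
          have := hτ.2
          simp only [ha] at this
          linarith
      _ = ENNReal.ofReal ((δ * (2:ℝ)⁻¹ ^ (k + 1)) ^ (γ - 1)) *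
            ∫⁻ τ in Set.Ioc (a k) (a (k + 1)), G τ :=
          lintegral_const_mul'' _ hG.restrict
      _ ≤ ENNReal.ofReal ((δ * (2:ℝ)⁻¹ ^ (k + 1)) ^ (γ - 1)) *
            ∫⁻ τ in Set.Ioc (t - δ * (2:ℝ)⁻¹ ^ k) t, G τ := by
          apply mul_le_mul_right
          apply lintegral_mono_set
          apply Set.Ioc_subset_Ioc le_rfl (halt (k+1)).le
      _ ≤ ENNReal.ofReal ((δ * (2:ℝ)⁻¹ ^ (k + 1)) ^ (γ - 1)) *
            ENNReal.ofReal (ε * (δ * (2:ℝ)⁻¹ ^ k)) := by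
          apply mul_le_mul_right
          apply hA _ (by positivity)
          have h1 : (2:ℝ)⁻¹ ^ k ≤ 1 := pow_le_one₀ (by norm_num) (by norm_num)
          nlinarith
      _ = ENNReal.ofReal ((δ * (2:ℝ)⁻¹ ^ (k + 1)) ^ (γ - 1) * (ε * (δ * (2:ℝ)⁻¹ ^ k))) :=
          (ENNReal.ofReal_mul (Real.rpow_nonneg hxpos.le _)).symm
      _ = ENNReal.ofReal (C * r ^ (k + 1)) := by
          congr 1
          have h2x : δ * (2:ℝ)⁻¹ ^ k = 2 * (δ * (2:ℝ)⁻¹ ^ (k + 1)) := by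
            rw [pow_succ]; ring
          rw [h2x]
          have hxg : (δ * (2:ℝ)⁻¹ ^ (k + 1)) ^ (γ - 1) * (δ * (2:ℝ)⁻¹ ^ (k + 1))
              = (δ * (2:ℝ)⁻¹ ^ (k + 1)) ^ γ := by
            rw [← Real.rpow_add_one hxpos.ne']
            norm_num
          have hsplit : (δ * (2:ℝ)⁻¹ ^ (k + 1)) ^ γ = δ ^ γ * ((2:ℝ)⁻¹ ^ (k + 1)) ^ γ :=
            Real.mul_rpow hδ.le (by positivity)
          have hpowpow : ((2:ℝ)⁻¹ ^ (k + 1) : ℝ) ^ γ = r ^ (k + 1) := by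
            rw [hrdef, ← Real.rpow_natCast ((2:ℝ)⁻¹) (k + 1), ← Real.rpow_mul (by norm_num),
              mul_comm, Real.rpow_mul (by norm_num), Real.rpow_natCast]
          calc (δ * (2:ℝ)⁻¹ ^ (k + 1)) ^ (γ - 1) * (ε * (2 * (δ * (2:ℝ)⁻¹ ^ (k + 1))))
              = 2 * ε * ((δ * (2:ℝ)⁻¹ ^ (k + 1)) ^ (γ - 1) * (δ * (2:ℝ)⁻¹ ^ (k + 1))) := by ring
            _ = 2 * ε * (δ ^ γ * r ^ (k + 1)) := by rw [hxg, hsplit, hpowpow]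
            _ = C * r ^ (k + 1) := by rw [hCdef]; ring
  calc ∫⁻ τ in Set.Ioc (t - δ) t, ENNReal.ofReal ((t - τ) ^ (γ - 1)) * G τ
      = ∫⁻ τ in Set.Ioo (t - δ) t, ENNReal.ofReal ((t - τ) ^ (γ - 1)) * G τ :=
        setLIntegral_congr (MeasureTheory.Ioo_ae_eq_Ioc (μ := volume) (a := t - δ) (b := t)).symm
    _ = ∫⁻ τ in ⋃ k, Set.Ioc (a k) (a (k + 1)), ENNReal.ofReal ((t - τ) ^ (γ - 1)) * G τ := by
        rw [hUnion]
    _ = ∑' k : ℕ, ∫⁻ τ in Set.Ioc (a k) (a (k + 1)), ENNReal.ofReal ((t - τ) ^ (γ - 1)) * G τ :=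
        lintegral_iUnion (fun _ => measurableSet_Ioc) hdisj _
    _ ≤ ∑' k : ℕ, ENNReal.ofReal (C * r ^ (k + 1)) := ENNReal.tsum_le_tsum piece
    _ = ∑' k : ℕ, ENNReal.ofReal (C * r) * ENNReal.ofReal r ^ k := by
        congr 1
        funext k
        rw [← ENNReal.ofReal_pow hr0, ← ENNReal.ofReal_mul (by positivity)]
        congr 1
        rw [pow_succ]
        ring
    _ = ENNReal.ofReal (C * r) * (1 - ENNReal.ofReal r)⁻¹ := by
        rw [ENNReal.tsum_mul_left, ENNReal.tsum_geometric]
    _ = ENNReal.ofReal (C * r) * ENNReal.ofReal ((1 - r)⁻¹) := by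
        congr 1
        rw [← ENNReal.ofReal_one, ← ENNReal.ofReal_sub _ hr0,
          ENNReal.ofReal_inv_of_pos (by linarith)]
    _ = ENNReal.ofReal (C * r * (1 - r)⁻¹) := by
        rw [← ENNReal.ofReal_mul (by positivity)]
    _ ≤ ENNReal.ofReal (4 * ε / (γ * Real.log 2)) := by
        apply ENNReal.ofReal_le_ofReal
        have hlog : (0:ℝ) < Real.log 2 := Real.log_pos one_lt_two
        have hrexp : r = Real.exp (-(γ * Real.log 2)) := by
          rw [hrdef, Real.rpow_def_of_pos (by norm_num), Real.log_inv]
          ring_nf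
        have hlb : γ * Real.log 2 * r ≤ 1 - r := by
          have h1 := Real.add_one_le_exp (γ * Real.log 2)
          have h2 : Real.exp (γ * Real.log 2) * Real.exp (-(γ * Real.log 2)) = 1 := by
            rw [← Real.exp_add]; simp
          rw [hrexp]
          nlinarith [Real.exp_pos (-(γ * Real.log 2))]
        have hr_half : (2:ℝ)⁻¹ ≤ r := by
          have := Real.rpow_le_rpow_of_exponent_ge (x := (2:ℝ)⁻¹) (by norm_num) (by norm_num) hγ1
          rwa [Real.rpow_one] at this
        have h1r : (0:ℝ) < 1 - r := by linarith
        have hkey : γ * Real.log 2 / 2 ≤ 1 - r := by nlinarith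
        have hδγ : δ ^ γ ≤ 1 := Real.rpow_le_one hδ.le hδ1 hγ.le
        have hδγ0 : (0:ℝ) ≤ δ ^ γ := Real.rpow_nonneg hδ.le _
        calc C * r * (1 - r)⁻¹ ≤ (2 * ε) * (1 - r)⁻¹ := by
              apply mul_le_mul_of_nonneg_right ?_ (by positivity)
              rw [hCdef]
              nlinarith
          _ ≤ (2 * ε) * (γ * Real.log 2 / 2)⁻¹ := by
              apply mul_le_mul_of_nonneg_left _ (by positivity)
              exact inv_anti₀ (by positivity) hkey
          _ = 4 * ε / (γ * Real.log 2) := by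
              field_simp
              ring


/-- The Riemann–Liouville fractional integral of order `γ > 0` with lower terminal `0`. -/
noncomputable def fracInt (γ : ℝ) (y : ℝ → ℝ) (t : ℝ) : ℝ :=
  (1 / Real.Gamma γ) * ∫ τ in (0:ℝ)..t, (t - τ) ^ (γ - 1) * y τ

/-- For `y` locally integrable on `ℝ` vanishing on `(-∞,0)`, the fractional integral
`I^γ y(t)` converges to `y(t)` as `γ → 0⁺`, for almost every `t`. -/
theorem fracInt_tendsto_ae (y : ℝ → ℝ) (hy : LocallyIntegrable y volume)
    (hy0 : ∀ t < (0:ℝ), y t = 0) :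
    ∀ᵐ t : ℝ ∂volume,
      Tendsto (fun γ : ℝ => fracInt γ y t) (nhdsWithin 0 (Set.Ioi 0)) (nhds (y t)) := by
  have h0 : ∀ᵐ t : ℝ ∂volume, t ≠ 0 := by
    rw [ae_iff]
    have hset : {t : ℝ | ¬t ≠ 0} = {0} := by ext x; simp
    rw [hset]
    exact measure_singleton 0
  filter_upwards [IsUnifLocDoublingMeasure.ae_tendsto_average_norm_sub volume hy 1, h0] with t hLt ht0
  have hav : Tendsto (fun r : ℝ => ⨍ τ in Metric.closedBall t r, ‖y τ - y t‖ ∂volume)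
      (𝓝[>] (0:ℝ)) (𝓝 0) := by
    refine hLt (ι := ℝ) (l := 𝓝[>] (0:ℝ)) (fun _ => t) (fun r => r) tendsto_id ?_
    filter_upwards [self_mem_nhdsWithin] with r hr
    have hr' : (0:ℝ) < r := hr
    show t ∈ Metric.closedBall t (1 * r)
    exact Metric.mem_closedBall_self (by linarith)
  rcases lt_or_gt_of_ne ht0 with htneg | htpos
  · -- t < 0 : everything is zero
    have hz : ∀ γ : ℝ, fracInt γ y t = 0 := by
      intro γ
      have hint : (∫ τ in (0:ℝ)..t, (t - τ) ^ (γ - 1) * y τ) = 0 := by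
        rw [intervalIntegral.integral_symm, intervalIntegral.integral_of_le htneg.le]
        have hz2 : (∫ τ in Set.Ioc t 0, (t - τ) ^ (γ - 1) * y τ ∂volume) = 0 := by
          apply integral_eq_zero_of_ae
          have h1 : ∀ᵐ τ ∂volume.restrict (Set.Ioc t 0), τ ∈ Set.Ioc t 0 :=
            ae_restrict_mem measurableSet_Ioc
          have h2 : ∀ᵐ τ ∂volume.restrict (Set.Ioc t 0), τ ≠ (0:ℝ) := ae_restrict_of_ae h0
          filter_upwards [h1, h2] with τ hτ hτ0
          have hτneg : τ < 0 := lt_of_le_of_ne hτ.2 hτ0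
          simp [hy0 τ hτneg]
        rw [hz2]
        ring
      simp [fracInt, hint]
    rw [hy0 t htneg]
    simpa [hz] using (tendsto_const_nhds :
      Tendsto (fun _ : ℝ => (0:ℝ)) (𝓝[>] (0:ℝ)) (𝓝 0))
  · -- main case t > 0
    set c := y t with hc
    set g : ℝ → ℝ := fun τ => ‖y τ - c‖ with hgdef
    have hym : AEStronglyMeasurable y volume := hy.aestronglyMeasurable
    have hgm : AEMeasurable g volume :=
      ((hym.sub aestronglyMeasurable_const).norm).aemeasurable
    set G : ℝ → ℝ≥0∞ := fun τ => ENNReal.ofReal (g τ) with hGdef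
    have hGm : AEMeasurable G volume := ENNReal.measurable_ofReal.comp_aemeasurable hgm
    have hyint : IntegrableOn y (Set.Ioc 0 t) volume :=
      (hy.integrableOn_isCompact isCompact_Icc).mono_set Set.Ioc_subset_Icc_self
    have hgint : IntegrableOn g (Set.Ioc 0 t) volume :=
      (hyint.sub (integrableOn_const measure_Ioc_lt_top.ne)).norm
    set M : ℝ := ∫ τ in Set.Ioc 0 t, g τ with hM
    have hM0 : 0 ≤ M := setIntegral_nonneg measurableSet_Ioc fun τ _ => norm_nonneg _
    have hGM : (∫⁻ τ in Set.Ioc 0 t, G τ) = ENNReal.ofReal M :=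
      (ofReal_integral_eq_lintegral_ofReal hgint
        (Filter.Eventually.of_forall fun τ => norm_nonneg _)).symm
    have hlog : (0:ℝ) < Real.log 2 := Real.log_pos one_lt_two
    have hΓcont : Tendsto (fun γ : ℝ => Real.Gamma (γ + 1)) (𝓝[>] (0:ℝ)) (𝓝 1) := by
      have hc1 : ContinuousAt Real.Gamma 1 := by
        refine (Real.differentiableAt_Gamma fun m => ?_).continuousAt
        have hm : (0:ℝ) ≤ m := Nat.cast_nonneg m
        intro h
        linarith
      have h2 : Tendsto (fun γ : ℝ => γ + 1) (𝓝[>] (0:ℝ)) (𝓝 1) := by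
        have h3 : Tendsto (fun γ : ℝ => γ + 1) (𝓝 (0:ℝ)) (𝓝 ((0:ℝ) + 1)) :=
          (continuous_id.add continuous_const).tendsto 0
        simpa using h3.mono_left nhdsWithin_le_nhds
      simpa [Real.Gamma_one, Function.comp_def] using hc1.tendsto.comp h2
    have htpow : Tendsto (fun γ : ℝ => t ^ γ) (𝓝[>] (0:ℝ)) (𝓝 1) := by
      have heq : (fun γ : ℝ => t ^ γ) = fun γ => Real.exp (Real.log t * γ) :=
        funext fun γ => Real.rpow_def_of_pos htpos γ
      rw [heq]
      have h3 : Tendsto (fun γ : ℝ => Real.exp (Real.log t * γ)) (𝓝 (0:ℝ))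
          (𝓝 (Real.exp (Real.log t * 0))) :=
        (Real.continuous_exp.comp (continuous_const.mul continuous_id)).tendsto 0
      simp only [mul_zero, Real.exp_zero] at h3
      exact h3.mono_left nhdsWithin_le_nhds
    have hγ0lim : Tendsto (fun γ : ℝ => γ) (𝓝[>] (0:ℝ)) (𝓝 0) :=
      tendsto_id.mono_left nhdsWithin_le_nhds
    rw [Metric.tendsto_nhds]
    intro ε hε
    set ε' : ℝ := ε / 100 with hε'def
    have hε' : 0 < ε' := by rw [hε'def]; linarith
    have havlt := hav.eventually_lt_const hε'
    rw [eventually_nhdsWithin_iff] at havlt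
    obtain ⟨δ₀, hδ₀pos, hδ₀⟩ := Metric.eventually_nhds_iff.mp havlt
    set δ : ℝ := min (min δ₀ 1) t / 2 with hδdef
    have hmin_pos : 0 < min (min δ₀ 1) t := lt_min (lt_min hδ₀pos one_pos) htpos
    have hδpos : 0 < δ := by rw [hδdef]; positivity
    have hδ1 : δ ≤ 1 := by
      have h1 : min (min δ₀ 1) t ≤ 1 := le_trans (min_le_left _ _) (min_le_right _ _)
      rw [hδdef]; linarith
    have hδδ₀ : δ < δ₀ := by
      have h1 : min (min δ₀ 1) t ≤ δ₀ := le_trans (min_le_left _ _) (min_le_left _ _)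
      rw [hδdef]; linarith
    have hδt : δ ≤ t / 2 := by
      have h1 : min (min δ₀ 1) t ≤ t := min_le_right _ _
      rw [hδdef]; linarith
    have hδt' : 0 ≤ t - δ := by linarith
    have hA : ∀ u, 0 < u → u ≤ δ →
        (∫⁻ τ in Set.Ioc (t - u) t, G τ) ≤ ENNReal.ofReal (2 * ε' * u) := by
      intro u hu huδ
      have hucb : Set.Ioc (t - u) t ⊆ Metric.closedBall t u := by
        intro x hx
        rw [Metric.mem_closedBall, Real.dist_eq, abs_le]
        exact ⟨by linarith [hx.1], by linarith [hx.2]⟩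
      have hbint : IntegrableOn g (Metric.closedBall t u) volume := by
        rw [Real.closedBall_eq_Icc]
        exact ((hy.integrableOn_isCompact isCompact_Icc).sub
          (integrableOn_const measure_Icc_lt_top.ne)).norm
      have havg : (⨍ τ in Metric.closedBall t u, g τ ∂volume) < ε' := by
        apply hδ₀
        · rw [Real.dist_eq, sub_zero, abs_of_pos hu]; linarith
        · exact hu
      have hvol : volume.real (Metric.closedBall t u) = 2 * u := by
        rw [Measure.real, Real.volume_closedBall, ENNReal.toReal_ofReal (by linarith)]
      have hint_le : (∫ τ in Metric.closedBall t u, g τ ∂volume) ≤ 2 * ε' * u := by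
        have heqa := setAverage_eq g (Metric.closedBall t u) (μ := volume)
        rw [smul_eq_mul, hvol] at heqa
        have h2u : (0:ℝ) < 2 * u := by linarith
        have heqb : (∫ τ in Metric.closedBall t u, g τ ∂volume)
            = 2 * u * ⨍ τ in Metric.closedBall t u, g τ ∂volume := by
          rw [heqa]; field_simp
        rw [heqb]
        nlinarith
      calc (∫⁻ τ in Set.Ioc (t - u) t, G τ) ≤ ∫⁻ τ in Metric.closedBall t u, G τ :=
            lintegral_mono_set hucb
        _ = ENNReal.ofReal (∫ τ in Metric.closedBall t u, g τ ∂volume) :=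
            (ofReal_integral_eq_lintegral_ofReal hbint
              (Filter.Eventually.of_forall fun τ => norm_nonneg _)).symm
        _ ≤ ENNReal.ofReal (2 * ε' * u) := ENNReal.ofReal_le_ofReal hint_le
    have hIoo : Set.Ioo (0:ℝ) 1 ∈ 𝓝[>] (0:ℝ) :=
      Ioo_mem_nhdsGT one_pos
    have key : ∀ γ ∈ Set.Ioo (0:ℝ) 1, |fracInt γ y t - c| ≤
        |c * (t ^ γ / Real.Gamma (γ + 1)) - c| + γ / Real.Gamma (γ + 1) * (δ⁻¹ * M)
          + 1 / Real.Gamma (γ + 1) * (8 * ε' / Real.log 2) := by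
      rintro γ ⟨hγ0, hγ1⟩
      have hΓpos : 0 < Real.Gamma γ := Real.Gamma_pos_of_pos hγ0
      have hΓ1pos : 0 < Real.Gamma (γ + 1) := Real.Gamma_pos_of_pos (by linarith)
      have hΓrec : Real.Gamma (γ + 1) = γ * Real.Gamma γ := Real.Gamma_add_one hγ0.ne'
      have hker : IntegrableOn (fun τ => (t - τ) ^ (γ - 1)) (Set.Ioc 0 t) volume := by
        have h1 : IntervalIntegrable (fun x : ℝ => x ^ (γ - 1)) volume 0 t :=
          intervalIntegral.intervalIntegrable_rpow' (by linarith)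
        have h2 := (h1.comp_sub_left t).symm
        simp only [sub_zero, sub_self] at h2
        exact (intervalIntegrable_iff_integrableOn_Ioc_of_le htpos.le).mp h2
      have hkernonneg : ∀ τ ∈ Set.Ioc (0:ℝ) t, 0 ≤ (t - τ) ^ (γ - 1) := fun τ hτ =>
        Real.rpow_nonneg (by linarith [hτ.2]) _
      have hsplit : (∫⁻ τ in Set.Ioc 0 t, ENNReal.ofReal ((t - τ) ^ (γ - 1)) * G τ)
          ≤ ENNReal.ofReal (δ⁻¹ * M) + ENNReal.ofReal (4 * (2 * ε') / (γ * Real.log 2)) := by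
        rw [← Set.Ioc_union_Ioc_eq_Ioc hδt' (by linarith : t - δ ≤ t),
          lintegral_union measurableSet_Ioc (Set.Ioc_disjoint_Ioc_of_le le_rfl)]
        apply add_le_add
        · calc (∫⁻ τ in Set.Ioc 0 (t - δ), ENNReal.ofReal ((t - τ) ^ (γ - 1)) * G τ)
              ≤ ∫⁻ τ in Set.Ioc 0 (t - δ), ENNReal.ofReal δ⁻¹ * G τ := by
                apply setLIntegral_mono' measurableSet_Ioc
                intro τ hτ
                apply mul_le_mul_left
                apply ENNReal.ofReal_le_ofReal
                calc (t - τ) ^ (γ - 1) ≤ δ ^ (γ - 1) :=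
                      Real.rpow_le_rpow_of_nonpos hδpos (by linarith [hτ.2]) (by linarith)
                  _ ≤ δ ^ (-1 : ℝ) :=
                      Real.rpow_le_rpow_of_exponent_ge hδpos hδ1 (by linarith)
                  _ = δ⁻¹ := Real.rpow_neg_one δ
            _ = ENNReal.ofReal δ⁻¹ * ∫⁻ τ in Set.Ioc 0 (t - δ), G τ :=
                lintegral_const_mul'' _ hGm.restrict
            _ ≤ ENNReal.ofReal δ⁻¹ * ENNReal.ofReal M := by
                apply mul_le_mul_right
                rw [← hGM]
                exact lintegral_mono_set (Set.Ioc_subset_Ioc le_rfl (by linarith))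
            _ = ENNReal.ofReal (δ⁻¹ * M) := (ENNReal.ofReal_mul (by positivity)).symm
        · exact dyadic_bound G hGm hδpos hδ1 (by positivity) hγ0 hγ1.le hA
      set f1 : ℝ → ℝ := fun τ => (t - τ) ^ (γ - 1) * (y τ - c) with hf1def
      have hkerm : AEStronglyMeasurable (fun τ : ℝ => (t - τ) ^ (γ - 1))
          (volume.restrict (Set.Ioc 0 t)) := by
        rw [← Measure.restrict_congr_set MeasureTheory.Ioo_ae_eq_Ioc]
        apply ContinuousOn.aestronglyMeasurable ?_ measurableSet_Ioo
        apply ContinuousOn.rpow_const ((continuous_const.sub continuous_id).continuousOn)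
        intro τ hτ
        left
        have := hτ.2
        intro hzero
        have : t - τ = 0 := hzero
        linarith
      have hf1m : AEStronglyMeasurable f1 (volume.restrict (Set.Ioc 0 t)) :=
        hkerm.mul ((hym.sub aestronglyMeasurable_const).restrict)
      have hf1norm : ∀ τ ∈ Set.Ioc (0:ℝ) t,
          ENNReal.ofReal ‖f1 τ‖ = ENNReal.ofReal ((t - τ) ^ (γ - 1)) * G τ := by
        intro τ hτ
        have h1 : ‖f1 τ‖ = (t - τ) ^ (γ - 1) * g τ := by
          rw [hf1def]
          simp only [norm_mul]
          rw [Real.norm_of_nonneg (hkernonneg τ hτ)]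
        rw [h1, ENNReal.ofReal_mul (hkernonneg τ hτ)]
      have hf1int : IntegrableOn f1 (Set.Ioc 0 t) volume := by
        refine ⟨hf1m, ?_⟩
        rw [hasFiniteIntegral_iff_norm]
        calc (∫⁻ τ in Set.Ioc 0 t, ENNReal.ofReal ‖f1 τ‖)
            = ∫⁻ τ in Set.Ioc 0 t, ENNReal.ofReal ((t - τ) ^ (γ - 1)) * G τ :=
              setLIntegral_congr_fun measurableSet_Ioc
                (fun x hx => hf1norm x hx)
          _ ≤ ENNReal.ofReal (δ⁻¹ * M) + ENNReal.ofReal (4 * (2 * ε') / (γ * Real.log 2)) :=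
              hsplit
          _ < ⊤ := ENNReal.add_lt_top.mpr ⟨ENNReal.ofReal_lt_top, ENNReal.ofReal_lt_top⟩
      have hB0 : (0:ℝ) ≤ 4 * (2 * ε') / (γ * Real.log 2) :=
        div_nonneg (by positivity) (mul_nonneg hγ0.le hlog.le)
      have habs : |∫ τ in Set.Ioc 0 t, f1 τ ∂volume|
          ≤ δ⁻¹ * M + 4 * (2 * ε') / (γ * Real.log 2) := by
        have h1 := norm_integral_le_lintegral_norm (μ := volume.restrict (Set.Ioc 0 t)) f1
        rw [Real.norm_eq_abs] at h1
        apply h1.trans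
        apply ENNReal.toReal_le_of_le_ofReal (by positivity)
        calc (∫⁻ τ in Set.Ioc 0 t, ENNReal.ofReal ‖f1 τ‖)
            = ∫⁻ τ in Set.Ioc 0 t, ENNReal.ofReal ((t - τ) ^ (γ - 1)) * G τ :=
              setLIntegral_congr_fun measurableSet_Ioc
                (fun x hx => hf1norm x hx)
          _ ≤ ENNReal.ofReal (δ⁻¹ * M) + ENNReal.ofReal (4 * (2 * ε') / (γ * Real.log 2)) :=
              hsplit
          _ = ENNReal.ofReal (δ⁻¹ * M + 4 * (2 * ε') / (γ * Real.log 2)) :=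
              (ENNReal.ofReal_add (by positivity) hB0).symm
      have hconst : (∫ τ in Set.Ioc 0 t, (t - τ) ^ (γ - 1) ∂volume) = t ^ γ / γ := by
        rw [← intervalIntegral.integral_of_le htpos.le]
        rw [intervalIntegral.integral_comp_sub_left (fun x : ℝ => x ^ (γ - 1)) t]
        simp only [sub_self, sub_zero]
        rw [integral_rpow (Or.inl (by linarith))]
        have hγγ : γ - 1 + 1 = γ := by ring
        rw [hγγ, Real.zero_rpow hγ0.ne']
        ring
      have hdecomp : (∫ τ in (0:ℝ)..t, (t - τ) ^ (γ - 1) * y τ)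
          = (∫ τ in Set.Ioc 0 t, f1 τ ∂volume) + c * (t ^ γ / γ) := by
        rw [intervalIntegral.integral_of_le htpos.le]
        have heq : (fun τ => (t - τ) ^ (γ - 1) * y τ)
            = fun τ => f1 τ + c * (t - τ) ^ (γ - 1) := by
          funext τ; rw [hf1def]; ring
        rw [heq, integral_add hf1int (hker.const_mul c), integral_const_mul, hconst]
      have hfrac : fracInt γ y t - c
          = γ / Real.Gamma (γ + 1) * (∫ τ in Set.Ioc 0 t, f1 τ ∂volume)
            + (c * (t ^ γ / Real.Gamma (γ + 1)) - c) := by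
        show (1 / Real.Gamma γ) * _ - c = _
        rw [hdecomp, hΓrec]
        field_simp
        ring
      rw [hfrac]
      have hQ : |γ / Real.Gamma (γ + 1) * (∫ τ in Set.Ioc 0 t, f1 τ ∂volume)|
          ≤ γ / Real.Gamma (γ + 1) * (δ⁻¹ * M)
            + 1 / Real.Gamma (γ + 1) * (8 * ε' / Real.log 2) := by
        rw [abs_mul, abs_of_nonneg (by positivity : (0:ℝ) ≤ γ / Real.Gamma (γ + 1))]
        calc γ / Real.Gamma (γ + 1) * |∫ τ in Set.Ioc 0 t, f1 τ ∂volume|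
            ≤ γ / Real.Gamma (γ + 1) * (δ⁻¹ * M + 4 * (2 * ε') / (γ * Real.log 2)) :=
              mul_le_mul_of_nonneg_left habs (by positivity)
          _ = γ / Real.Gamma (γ + 1) * (δ⁻¹ * M)
              + 1 / Real.Gamma (γ + 1) * (8 * ε' / Real.log 2) := by
              field_simp
              ring
      calc |γ / Real.Gamma (γ + 1) * (∫ τ in Set.Ioc 0 t, f1 τ ∂volume)
            + (c * (t ^ γ / Real.Gamma (γ + 1)) - c)|
          ≤ |γ / Real.Gamma (γ + 1) * (∫ τ in Set.Ioc 0 t, f1 τ ∂volume)|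
            + |c * (t ^ γ / Real.Gamma (γ + 1)) - c| := abs_add_le _ _
        _ ≤ |c * (t ^ γ / Real.Gamma (γ + 1)) - c| + γ / Real.Gamma (γ + 1) * (δ⁻¹ * M)
            + 1 / Real.Gamma (γ + 1) * (8 * ε' / Real.log 2) := by linarith
    have hB : Tendsto (fun γ : ℝ => |c * (t ^ γ / Real.Gamma (γ + 1)) - c|)
        (𝓝[>] (0:ℝ)) (𝓝 0) := by
      have h1 : Tendsto (fun γ : ℝ => t ^ γ / Real.Gamma (γ + 1)) (𝓝[>] (0:ℝ)) (𝓝 1) := by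
        simpa [Pi.div_def] using htpow.div hΓcont one_ne_zero
      have h2 := ((h1.const_mul c).sub_const c).abs
      simpa using h2
    have hX : Tendsto (fun γ : ℝ => γ / Real.Gamma (γ + 1) * (δ⁻¹ * M))
        (𝓝[>] (0:ℝ)) (𝓝 0) := by
      have h1 := (hγ0lim.div hΓcont one_ne_zero).mul_const (δ⁻¹ * M)
      simpa using h1
    have hY : Tendsto (fun γ : ℝ => 1 / Real.Gamma (γ + 1) * (8 * ε' / Real.log 2))
        (𝓝[>] (0:ℝ)) (𝓝 (8 * ε' / Real.log 2)) := by
      have h1 := ((tendsto_const_nhds (x := (1:ℝ)) (f := 𝓝[>] (0:ℝ))).div hΓcont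
        one_ne_zero).mul_const (8 * ε' / Real.log 2)
      simpa using h1
    have hsum := (hB.add hX).add hY
    have hlt : (0:ℝ) + 0 + 8 * ε' / Real.log 2 < ε := by
      have hlog2 : (0.6931471803:ℝ) < Real.log 2 := Real.log_two_gt_d9
      rw [hε'def, zero_add, zero_add, div_lt_iff₀ (by linarith)]
      nlinarith
    have hev := hsum.eventually_lt_const hlt
    filter_upwards [hev, hIoo] with γ h1 h2
    rw [Real.dist_eq]
    exact lt_of_le_of_lt (key γ h2) h1
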